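/- For r ≥ 3, the element of L_r labeled by the all-ones column is a loose element of L_r; for r ≥ 4, the element of J_r labeled by the column (0,1,1,…,1)^T is a loose element of J_r; and for any restriction N of M_r (r ≥ 2) or of N_r (r ≥ 3) that has no coloops and whose ground set contains the distinguished element z, the element z is a loose element of N. -/

import Mathlib

namespace LoosePaper

open Set
open scoped Matroid

variable {α β : Type*}

/-- A circuit of a matroid: a minimal dependent set. -/
def Circuit (M : Matroid α) (C : Set α) : Prop :=
  M.Dep C ∧ ∀ D, M.Dep D → D ⊆ C → D = C

/-- The rank of a matroid: the (common) cardinality of its bases. -/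
noncomputable def rank (M : Matroid α) : ℕ :=
  sInf {n | ∃ B, M.IsBase B ∧ B.ncard = n}

/-- An element is loose if every circuit containing it has size at least the rank. -/
def Loose (M : Matroid α) (e : α) : Prop :=
  e ∈ M.E ∧ ∀ C, Circuit M C → e ∈ C → rank M ≤ C.ncard

/-- An element is free if every circuit containing it is spanning. -/
def FreeElt (M : Matroid α) (e : α) : Prop :=
  e ∈ M.E ∧ ∀ C, Circuit M C → e ∈ C → M.closure C = M.E

/-- A coloop: an element contained in every base. -/
def Coloop (M : Matroid α) (e : α) : Prop :=
  e ∈ M.E ∧ ∀ B, M.IsBase B → e ∈ B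

def NoColoops (M : Matroid α) : Prop := ∀ e, ¬ Coloop M e

/-- A matroid is simple if every pair of its elements is independent. -/
def Simple (M : Matroid α) : Prop :=
  ∀ e ∈ M.E, ∀ f ∈ M.E, M.Indep {e, f}

/-- A matroid is paving if every circuit has size at least the rank. -/
def Paving (M : Matroid α) : Prop :=
  ∀ C, Circuit M C → rank M ≤ C.ncard

/-- `M` is representable over the field `F`. -/
def Representable (M : Matroid α) (F : Type*) [Field F] : Prop :=
  ∃ (ι : Type) (v : α → ι → F),
    ∀ I, I ⊆ M.E → (M.Indep I ↔ LinearIndependent F (fun x : I => v x.1))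

/-- `N` is the vector matroid, on ground set all of `η`, of the matrix whose
column labelled by `c : η` is `A c`. -/
def IsVectorMatroidOn (F : Type*) [Field F] {η ι : Type*} (A : η → ι → F)
    (N : Matroid η) : Prop :=
  N.E = Set.univ ∧ ∀ I : Set η, (N.Indep I ↔ LinearIndependent F (fun x : I => A x.1))

/-- `φ` is an isomorphism from `M` to `N`. -/
def IsIsoTo (M : Matroid α) (N : Matroid β) (φ : α → β) : Prop :=
  Set.BijOn φ M.E N.E ∧ ∀ I, I ⊆ M.E → (M.Indep I ↔ N.Indep (φ '' I))

/-- The matrix `[I_r | D]` of the matroid `M_r`; the column `Sum.inl i` is the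
`i`-th standard basis vector, the column `Sum.inr 0` (the distinguished element `z`)
is the all-ones vector, and for `1 ≤ j ≤ r-1` the column `Sum.inr j` has ones
exactly in rows `0` and `j` (`0`-indexed). -/
def MrMatrix (r : ℕ) : (Fin r ⊕ Fin r) → Fin r → ZMod 2
  | Sum.inl i => fun k => if k = i then 1 else 0
  | Sum.inr j => fun k =>
      if j.val = 0 then 1 else if k.val = 0 ∨ k = j then 1 else 0

/-- The matrix `[I_r | D]` of the matroid `N_r`; the column `Sum.inr 0`
(the distinguished element `z`) is `(0,1,…,1)ᵀ`, and for `1 ≤ j ≤ r-2` the column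
`Sum.inr j` has ones exactly in rows `0`, `1` and `j+1` (`0`-indexed). -/
def NrMatrix (r : ℕ) : (Fin r ⊕ Fin (r - 1)) → Fin r → ZMod 2
  | Sum.inl i => fun k => if k = i then 1 else 0
  | Sum.inr j => fun k =>
      if j.val = 0 then (if k.val = 0 then 0 else 1)
      else if k.val = 0 ∨ k.val = 1 ∨ k.val = j.val + 1 then 1 else 0

/-- The matrix `[I_r | D]` of the matroid `L_r`; the columns of `D` are the all-ones
vector, `(1,1,0,…,0)ᵀ`, `(1,0,1,0,…,0)ᵀ` and `(0,1,1,0,…,0)ᵀ`. -/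
def LrMatrix (r : ℕ) : (Fin r ⊕ Fin 4) → Fin r → ZMod 2
  | Sum.inl i => fun k => if k = i then 1 else 0
  | Sum.inr j => fun k =>
      if j = 0 then 1
      else if j = 1 then (if k.val = 0 ∨ k.val = 1 then 1 else 0)
      else if j = 2 then (if k.val = 0 ∨ k.val = 2 then 1 else 0)
      else if k.val = 1 ∨ k.val = 2 then 1 else 0

/-- The matrix `[I_r | D]` of the matroid `J_r`; the columns of `D` are
`(0,1,1,…,1)ᵀ`, `(1,1,1,0,…,0)ᵀ`, `(1,1,0,1,0,…,0)ᵀ` and `(1,0,1,1,0,…,0)ᵀ`. -/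
def JrMatrix (r : ℕ) : (Fin r ⊕ Fin 4) → Fin r → ZMod 2
  | Sum.inl i => fun k => if k = i then 1 else 0
  | Sum.inr j => fun k =>
      if j = 0 then (if k.val = 0 then 0 else 1)
      else if j = 1 then (if k.val = 0 ∨ k.val = 1 ∨ k.val = 2 then 1 else 0)
      else if j = 2 then (if k.val = 0 ∨ k.val = 1 ∨ k.val = 3 then 1 else 0)
      else if k.val = 0 ∨ k.val = 2 ∨ k.val = 3 then 1 else 0

/-- A matrix over `GF(3)` whose vector matroid is `U_{2,4}`. -/
def U24Matrix : Fin 4 → Fin 2 → ZMod 3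
  | 0 => fun k => if k = 0 then 1 else 0
  | 1 => fun k => if k = 1 then 1 else 0
  | 2 => fun _ => 1
  | 3 => fun k => if k = 0 then 1 else 2

/-- A `GF(3)`-matrix representing the matroid obtained from a circuit
`{e, c_0, …, c_{n-1}}` (where `e` is the element `Sum.inl ()`) by 2-summing a copy
of `U_{2,4}` across each element `c_d` with `d ∈ D`.  For `d ∉ D` the element
`Sum.inr (d, 0)` is `c_d`, and for `d ∈ D` the elements `Sum.inr (d, j)`,
`j = 0, 1, 2`, are the three elements of the copy of `U_{2,4}` other than its
basepoint. -/
def thetaMatrix (n : ℕ) (D : Finset (Fin n)) :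
    (Unit ⊕ Fin n × Fin 3) → (Fin n ⊕ Fin n) → ZMod 3
  | Sum.inl _ => fun row => Sum.elim (fun _ => 1) (fun _ => 0) row
  | Sum.inr (d, j) => fun row =>
      let ed : (Fin n ⊕ Fin n) → ZMod 3 :=
        Sum.elim (fun i => if i = d then 1 else 0) (fun _ => 0)
      let wd : (Fin n ⊕ Fin n) → ZMod 3 :=
        Sum.elim (fun _ => 0) (fun i => if i = d then 1 else 0)
      if d ∈ D then
        (if j = 0 then wd row else if j = 1 then ed row + wd row else ed row - wd row)
      else ed row

/-- The ground set of the 2-sum construction: the circuit element `e`, the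
untouched circuit elements `c_d` for `d ∉ D`, and three `U_{2,4}`-elements for
each `d ∈ D`. -/
def thetaGround (n : ℕ) (D : Finset (Fin n)) : Set (Unit ⊕ Fin n × Fin 3) :=
  {x | ∀ d : Fin n, ∀ j : Fin 3, x = Sum.inr (d, j) → (j = 0 ∨ d ∈ D)}

lemma rank_le_of_rep {γ : Type*} {n : ℕ} {A : γ → Fin n → ZMod 2} {M : Matroid γ}
    (hI : ∀ I : Set γ, M.Indep I → LinearIndependent (ZMod 2) (fun x : I => A x)) :
    rank M ≤ n := by
  classical
  obtain ⟨B, hB⟩ := M.exists_isBase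
  have hli := hI B hB.indep
  have hfin : B.Finite := by
    have := hli.lt_aleph0_of_finite
    rw [Cardinal.mk_lt_aleph0_iff] at this
    exact Set.finite_coe_iff.1 this
  haveI : Fintype ↑B := hfin.fintype
  have hcard : Fintype.card ↑B ≤ n := by
    have := hli.fintype_card_le_finrank
    rwa [Module.finrank_pi, Fintype.card_fin] at this
  have hncard : B.ncard = Fintype.card ↑B := by
    rw [← Nat.card_coe_set_eq, Nat.card_eq_fintype_card]
  have : rank M ≤ B.ncard := Nat.sInf_le ⟨B, hB, rfl⟩
  omega

lemma circuit_of_restrict {γ : Type*} {M : Matroid γ} (hE : M.E = univ) {R C : Set γ}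
    (hC : Circuit (M ↾ R) C) : Circuit M C := by
  obtain ⟨hdep, hmin⟩ := hC
  rw [Matroid.dep_iff, Matroid.restrict_indep_iff, Matroid.restrict_ground_eq] at hdep
  refine ⟨⟨fun hi => hdep.1 ⟨hi, hdep.2⟩, by rw [hE]; exact subset_univ _⟩, ?_⟩
  intro D hD hDC
  refine hmin D ⟨?_, hDC.trans hdep.2⟩ hDC
  rw [Matroid.restrict_indep_iff]
  exact fun h => hD.not_indep h.1

lemma zmod2_am (a : ZMod 2) : a = 0 ∨ a = 1 := by revert a; decide

lemma circuit_sum {γ : Type*} [Fintype γ] {r : ℕ} {A : γ → Fin r → ZMod 2}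
    {M : Matroid γ} (hE : M.E = univ)
    (hI : ∀ I : Set γ, M.Indep I ↔ LinearIndependent (ZMod 2) (fun x : I => A x))
    {C : Set γ} (hC : Circuit M C) (i : Fin r) :
    ∑ x ∈ (C.toFinite).toFinset, A x i = 0 := by
  classical
  obtain ⟨hdep, hmin⟩ := hC
  have hnind : ¬ M.Indep C := hdep.not_indep
  rw [hI] at hnind
  haveI : Fintype ↑C := (C.toFinite).fintype
  have hCT : (C.toFinite).toFinset = C.toFinset := Set.Finite.toFinset_eq_toFinset _
  rw [hCT]
  rw [Fintype.not_linearIndependent_iff] at hnind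
  obtain ⟨g, hg0, i0, hi0⟩ := hnind
  set g' : γ → ZMod 2 := fun x => if h : x ∈ C then g ⟨x, h⟩ else 0 with hg'
  set T : Finset γ := C.toFinset.filter (fun x => g' x ≠ 0) with hT
  have hTC : (↑T : Set γ) ⊆ C := by
    intro x hx
    simp only [hT, Finset.coe_filter, Set.mem_setOf_eq] at hx
    exact Set.mem_toFinset.1 hx.1
  have h1 : ∀ j, ∑ x ∈ C.toFinset, g' x • A x j = 0 := by
    intro j
    have h2 : ∑ x : ↑C, g' ↑x • A (↑x) j = ∑ x ∈ C.toFinset, g' x • A x j :=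
      Finset.sum_set_coe (f := fun x => g' x • A x j) C
    rw [← h2]
    have h3 := congrFun hg0 j
    rw [Finset.sum_apply] at h3
    rw [show (0 : Fin r → ZMod 2) j = 0 from rfl] at h3
    rw [← h3]
    refine Finset.sum_congr rfl fun x _ => ?_
    simp [hg', x.2]
  have hsumT : ∀ j, ∑ x ∈ T, A x j = 0 := by
    intro j
    calc ∑ x ∈ T, A x j = ∑ x ∈ T, g' x • A x j := by
          refine Finset.sum_congr rfl fun x hx => ?_
          rcases zmod2_am (g' x) with h | h
          · rw [hT] at hx; exact absurd h (Finset.mem_filter.1 hx).2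
          · rw [h, one_smul]
      _ = ∑ x ∈ C.toFinset, g' x • A x j := by
          rw [hT]
          exact Finset.sum_filter_of_ne (fun x _ hne h0 => hne (by rw [h0, zero_smul]))
      _ = 0 := h1 j
  have hi0T : (↑i0 : γ) ∈ T := by
    simp only [hT, Finset.mem_filter, Set.mem_toFinset]
    refine ⟨i0.2, ?_⟩
    simpa [hg'] using hi0
  have hdepT : M.Dep ↑T := by
    rw [Matroid.dep_iff, hI]
    refine ⟨?_, by rw [hE]; exact subset_univ _⟩
    rw [Fintype.not_linearIndependent_iff]
    refine ⟨fun _ => 1, ?_, ⟨⟨↑i0, hi0T⟩, one_ne_zero⟩⟩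
    funext j
    rw [Finset.sum_apply, Pi.zero_apply]
    simp only [one_smul]
    exact (Finset.sum_finset_coe (fun x => A x j) T).trans (hsumT j)
  have hTeq : (↑T : Set γ) = C := hmin ↑T hdepT hTC
  have hfin : C.toFinset = T := by
    apply Finset.coe_injective
    rw [Set.coe_toFinset, hTeq]
  rw [hfin]
  exact hsumT i


lemma sum_support {γ : Type*} [DecidableEq γ] (s P : Finset γ) (f : γ → ZMod 2)
    (h : ∀ x ∈ s, x ∉ P → f x = 0) :
    ∑ x ∈ s, f x = ∑ x ∈ P, if x ∈ s then f x else 0 := by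
  rw [Finset.sum_ite_mem]
  exact (Finset.sum_subset (Finset.inter_subset_right)
    (fun x hx hnx => h x hx (fun hP => hnx (Finset.mem_inter.2 ⟨hP, hx⟩)))).symm


set_option maxHeartbeats 2000000 in
lemma Mcount {r : ℕ} (hr : 2 ≤ r) (s : Finset (Fin r ⊕ Fin r)) {z0 : Fin r} (h0 : z0.val = 0)
    (hrow : ∀ i : Fin r, ∑ x ∈ s, MrMatrix r x i = 0)
    (hzs : Sum.inr z0 ∈ s) : r ≤ s.card := by
  classical
  have key : ∀ i : Fin r, 1 ≤ i.val → Sum.inl i ∈ s ∨ Sum.inr i ∈ s := by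
    intro i hi
    by_contra hcon
    push_neg at hcon
    have h0' := hrow i
    rw [sum_support s {Sum.inl i, Sum.inr i, Sum.inr z0} _ ?_] at h0'
    · rw [Finset.sum_insert (by simp), Finset.sum_pair
        (by simp [Fin.ext_iff]; omega)] at h0'
      rw [if_neg hcon.1, if_neg hcon.2, if_pos hzs] at h0'
      simp [MrMatrix, h0] at h0'
    · intro x hx hxP
      simp only [Finset.mem_insert, Finset.mem_singleton] at hxP
      push_neg at hxP
      rcases x with j | j
      · have hji : j ≠ i := fun h => hxP.1 (by rw [h])
        simp [MrMatrix]
        intro h; exact absurd h.symm hji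
      · have hji : j ≠ i := fun h => hxP.2.1 (by rw [h])
        have hj0 : j ≠ z0 := fun h => hxP.2.2 (by rw [h])
        have hv0 : j.val ≠ 0 := fun h => hj0 (Fin.ext (by omega))
        simp only [MrMatrix, if_neg hv0]
        have : ¬ (i.val = 0 ∨ i = j) := by
          rintro (h | h)
          · omega
          · exact hji h.symm
        rw [if_neg this]
  have hinj : (Finset.univ : Finset (Fin r)).card ≤ s.card := by
    apply Finset.card_le_card_of_injOn
      (fun i : Fin r => if i.val = 0 then Sum.inr z0
        else if Sum.inl i ∈ s then Sum.inl i else Sum.inr i) ?_ ?_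
    · intro i _
      dsimp only
      split_ifs with h1 h2
      · exact hzs
      · exact h2
      · rcases key i (by omega) with h | h
        · exact absurd h h2
        · exact h
    · intro a _ b _ hab
      dsimp only at hab
      by_cases ha : a.val = 0 <;> by_cases hb : b.val = 0
      · exact Fin.ext (by omega)
      · rw [if_pos ha, if_neg hb] at hab
        split_ifs at hab <;>
          first
            | exact absurd (Fin.ext_iff.1 (Sum.inr_injective hab)) (by omega)
            | exact absurd hab (by simp)
      · rw [if_neg ha, if_pos hb] at hab
        split_ifs at hab <;>
          first
            | exact absurd (Fin.ext_iff.1 (Sum.inr_injective hab)) (by omega)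
            | exact absurd hab (by simp)
      · rw [if_neg ha, if_neg hb] at hab
        split_ifs at hab <;>
          first
            | exact Sum.inl_injective hab
            | exact Sum.inr_injective hab
            | exact absurd hab (by simp)
  simpa using hinj

set_option maxHeartbeats 2000000 in
lemma Ncount {r : ℕ} (hr : 3 ≤ r) (s : Finset (Fin r ⊕ Fin (r - 1))) {z0 : Fin (r - 1)}
    (h0 : z0.val = 0)
    (hrow : ∀ i : Fin r, ∑ x ∈ s, NrMatrix r x i = 0)
    (hzs : Sum.inr z0 ∈ s) : r ≤ s.card := by
  classical
  have key : ∀ i : Fin r, 2 ≤ i.val →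
      Sum.inl i ∈ s ∨ Sum.inr (⟨i.val - 1, by have := i.isLt; omega⟩ : Fin (r - 1)) ∈ s := by
    intro i hi
    set j : Fin (r - 1) := ⟨i.val - 1, by have := i.isLt; omega⟩ with hj
    by_contra hcon
    push_neg at hcon
    have h0' := hrow i
    rw [sum_support s {Sum.inl i, Sum.inr j, Sum.inr z0} _ ?_] at h0'
    · rw [Finset.sum_insert (by simp), Finset.sum_pair
        (by simp [hj, Fin.ext_iff]; omega)] at h0'
      rw [if_neg hcon.1, if_neg hcon.2, if_pos hzs] at h0'
      simp only [NrMatrix, h0] at h0'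
      simp [show ¬ i.val = 0 by omega] at h0'
    · intro x hx hxP
      simp only [Finset.mem_insert, Finset.mem_singleton] at hxP
      push_neg at hxP
      rcases x with j' | j'
      · have hji : j' ≠ i := fun h => hxP.1 (by rw [h])
        simp [NrMatrix]
        intro h; exact absurd h.symm hji
      · have hjj : j' ≠ j := fun h => hxP.2.1 (by rw [h])
        have hj0 : j' ≠ z0 := fun h => hxP.2.2 (by rw [h])
        have hv0 : j'.val ≠ 0 := fun h => hj0 (Fin.ext (by omega))
        simp only [NrMatrix, if_neg hv0]
        have : ¬ (i.val = 0 ∨ i.val = 1 ∨ i.val = j'.val + 1) := by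
          rintro (h | h | h)
          · omega
          · omega
          · refine hjj (Fin.ext ?_)
            have : j.val = i.val - 1 := rfl
            omega
        rw [if_neg this]
  have key01 : Sum.inl (⟨0, by omega⟩ : Fin r) ∈ s ∨ Sum.inl (⟨1, by omega⟩ : Fin r) ∈ s := by
    set r0 : Fin r := ⟨0, by omega⟩
    set r1 : Fin r := ⟨1, by omega⟩
    by_contra hcon
    push_neg at hcon
    have e0 := hrow r0
    have e1 := hrow r1
    have hsum : ∑ x ∈ s, (NrMatrix r x r0 + NrMatrix r x r1) = 0 := by
      rw [Finset.sum_add_distrib, e0, e1, add_zero]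
    rw [sum_support s {Sum.inl r0, Sum.inl r1, Sum.inr z0}
      (fun x => NrMatrix r x r0 + NrMatrix r x r1) ?_] at hsum
    · rw [Finset.sum_insert (by simp [Fin.ext_iff]), Finset.sum_pair (by simp)] at hsum
      rw [if_neg hcon.1, if_neg hcon.2, if_pos hzs] at hsum
      revert hsum
      simp only [NrMatrix, h0]
      norm_num
    · intro x hx hxP
      simp only [Finset.mem_insert, Finset.mem_singleton] at hxP
      push_neg at hxP
      rcases x with j' | j'
      · have h1 : j' ≠ r0 := fun h => hxP.1 (by rw [h])
        have h2 : j' ≠ r1 := fun h => hxP.2.1 (by rw [h])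
        simp only [NrMatrix]
        rw [if_neg (fun h => h1 h.symm), if_neg (fun h => h2 h.symm), add_zero]
      · have hj0 : j' ≠ z0 := fun h => hxP.2.2 (by rw [h])
        have hv0 : j'.val ≠ 0 := fun h => hj0 (Fin.ext (by omega))
        simp only [NrMatrix, if_neg hv0]
        rw [if_pos (by tauto), if_pos (by tauto)]
        decide
  -- injection
  have hinj : (Finset.univ : Finset (Fin r)).card ≤ s.card := by
    apply Finset.card_le_card_of_injOn
      (fun i : Fin r => if i.val = 0 then Sum.inr z0
        else if i.val = 1 then
          (if Sum.inl (⟨0, by omega⟩ : Fin r) ∈ s then Sum.inl (⟨0, by omega⟩ : Fin r)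
            else Sum.inl (⟨1, by omega⟩ : Fin r))
        else if Sum.inl i ∈ s then Sum.inl i
          else Sum.inr (⟨i.val - 1, by have := i.isLt; omega⟩ : Fin (r - 1))) ?_ ?_
    · intro i _
      dsimp only
      split_ifs with h1 h2 h3 h4
      · exact hzs
      · exact h3
      · rcases key01 with h | h
        · exact absurd h h3
        · exact h
      · exact h4
      · rcases key i (by omega) with h | h
        · exact absurd h h4
        · exact h
    · intro a _ b _ hab
      dsimp only at hab
      split_ifs at hab <;>
        first
          | (exact Fin.ext (by omega))
          | (exact Sum.inl_injective hab)
          | (exact Fin.ext (by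
              have := Fin.ext_iff.1 (Sum.inr_injective hab)
              simp at this
              omega))
          | (exfalso;
             first
               | exact absurd (Fin.ext_iff.1 (Sum.inr_injective hab)) (by simp; omega)
               | exact absurd (Fin.ext_iff.1 (Sum.inl_injective hab)) (by simp; omega)
               | simpa using hab)
  simpa using hinj

set_option maxHeartbeats 2000000 in
lemma Lcount {r : ℕ} (hr : 3 ≤ r) (s : Finset (Fin r ⊕ Fin 4))
    (hrow : ∀ i : Fin r, ∑ x ∈ s, LrMatrix r x i = 0)
    (hzs : Sum.inr 0 ∈ s) : r ≤ s.card := by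
  classical
  set a0 : Fin r ⊕ Fin 4 := Sum.inl ⟨0, by omega⟩ with ha0
  set a1 : Fin r ⊕ Fin 4 := Sum.inl ⟨1, by omega⟩ with ha1
  set a2 : Fin r ⊕ Fin 4 := Sum.inl ⟨2, by omega⟩ with ha2
  set b1 : Fin r ⊕ Fin 4 := Sum.inr 1 with hb1'
  set b2 : Fin r ⊕ Fin 4 := Sum.inr 2 with hb2'
  set b3 : Fin r ⊕ Fin 4 := Sum.inr 3 with hb3'
  have hbig : ∀ i : Fin r, 3 ≤ i.val → Sum.inl i ∈ s := by
    intro i hi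
    by_contra hni
    have h0' := hrow i
    rw [sum_support s {Sum.inl i, Sum.inr 0} _ ?_] at h0'
    · rw [Finset.sum_pair (by simp)] at h0'
      rw [if_neg hni, if_pos hzs] at h0'
      simp [LrMatrix] at h0'
    · intro x hx hxP
      simp only [Finset.mem_insert, Finset.mem_singleton] at hxP
      push_neg at hxP
      rcases x with j | j
      · have hji : j ≠ i := fun h => hxP.1 (by rw [h])
        simp [LrMatrix]
        intro h; exact absurd h.symm hji
      · have hj0 : j ≠ 0 := fun h => hxP.2 (by rw [h])
        fin_cases j
        · exact absurd rfl hj0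
        · simp [LrMatrix]; omega
        · simp [LrMatrix]; omega
        · simp [LrMatrix]; omega
  -- the three row equations
  have mkrow : ∀ (row : Fin r) (y1 y2 : Fin r ⊕ Fin 4), y1 ≠ y2 →
      y1 ≠ Sum.inr 0 → y2 ≠ Sum.inr 0 → Sum.inl row ≠ y1 → Sum.inl row ≠ y2 →
      (Sum.inl row : Fin r ⊕ Fin 4) ≠ Sum.inr 0 →
      LrMatrix r y1 row = 1 → LrMatrix r y2 row = 1 →
      LrMatrix r (Sum.inr 0) row = 1 →
      (∀ x, x ∉ ({Sum.inl row, y1, y2, Sum.inr 0} : Finset (Fin r ⊕ Fin 4)) →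
        LrMatrix r x row = 0) →
      (if Sum.inl row ∈ s then (1 : ZMod 2) else 0) + ((if y1 ∈ s then (1:ZMod 2) else 0)
        + ((if y2 ∈ s then (1:ZMod 2) else 0) + 1)) = 0 := by
    intro row y1 y2 h12 h10 h20 hr1 hr2 hr0 v1 v2 v0 hsupp
    have h0' := hrow row
    rw [sum_support s {Sum.inl row, y1, y2, Sum.inr 0} _
      (fun x hx hxP => hsupp x hxP)] at h0'
    rw [Finset.sum_insert (by simp [hr1, hr2, hr0]),
        Finset.sum_insert (by simp [h12, h10]),
        Finset.sum_pair h20] at h0'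
    rw [if_pos hzs, v1, v2, v0] at h0'
    rw [show LrMatrix r (Sum.inl row) row = 1 by simp [LrMatrix]] at h0'
    exact h0'
  have supp0 : ∀ x, x ∉ ({a0, b1, b2, Sum.inr 0} : Finset (Fin r ⊕ Fin 4)) →
      LrMatrix r x (⟨0, by omega⟩ : Fin r) = 0 := by
    intro x hxP
    simp only [Finset.mem_insert, Finset.mem_singleton] at hxP
    push_neg at hxP
    rcases x with j | j
    · have : (⟨0, by omega⟩ : Fin r) ≠ j := fun h => hxP.1 (by rw [ha0, h])
      simp [LrMatrix, this]
    · fin_cases j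
      · exact absurd rfl hxP.2.2.2
      · exact absurd rfl hxP.2.1
      · exact absurd rfl hxP.2.2.1
      · simp [LrMatrix]
  have supp1 : ∀ x, x ∉ ({a1, b1, b3, Sum.inr 0} : Finset (Fin r ⊕ Fin 4)) →
      LrMatrix r x (⟨1, by omega⟩ : Fin r) = 0 := by
    intro x hxP
    simp only [Finset.mem_insert, Finset.mem_singleton] at hxP
    push_neg at hxP
    rcases x with j | j
    · have : (⟨1, by omega⟩ : Fin r) ≠ j := fun h => hxP.1 (by rw [ha1, h])
      simp [LrMatrix, this]
    · fin_cases j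
      · exact absurd rfl hxP.2.2.2
      · exact absurd rfl hxP.2.1
      · simp [LrMatrix]
      · exact absurd rfl hxP.2.2.1
  have supp2 : ∀ x, x ∉ ({a2, b2, b3, Sum.inr 0} : Finset (Fin r ⊕ Fin 4)) →
      LrMatrix r x (⟨2, by omega⟩ : Fin r) = 0 := by
    intro x hxP
    simp only [Finset.mem_insert, Finset.mem_singleton] at hxP
    push_neg at hxP
    rcases x with j | j
    · have : (⟨2, by omega⟩ : Fin r) ≠ j := fun h => hxP.1 (by rw [ha2, h])
      simp [LrMatrix, this]
    · fin_cases j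
      · exact absurd rfl hxP.2.2.2
      · simp [LrMatrix]
      · exact absurd rfl hxP.2.1
      · exact absurd rfl hxP.2.2.1
  have E0 := mkrow ⟨0, by omega⟩ b1 b2 (by simp [hb1', hb2']) (by simp [hb1'])
    (by simp [hb2']) (by simp [ha0, hb1']) (by simp [ha0, hb2']) (by simp [ha0])
    (by simp [LrMatrix, hb1']) (by simp [LrMatrix, hb2']) (by simp [LrMatrix])
    (by rw [← ha0]; exact supp0)
  have E1 := mkrow ⟨1, by omega⟩ b1 b3 (by simp [hb1', hb3']) (by simp [hb1'])
    (by simp [hb3']) (by simp [ha1, hb1']) (by simp [ha1, hb3']) (by simp [ha1])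
    (by simp [LrMatrix, hb1']) (by simp [LrMatrix, hb3']) (by simp [LrMatrix])
    (by rw [← ha1]; exact supp1)
  have E2 := mkrow ⟨2, by omega⟩ b2 b3 (by simp [hb2', hb3']) (by simp [hb2'])
    (by simp [hb3']) (by simp [ha2, hb2']) (by simp [ha2, hb3']) (by simp [ha2])
    (by simp [LrMatrix, hb2']) (by simp [LrMatrix, hb3']) (by simp [LrMatrix])
    (by rw [← ha2]; exact supp2)
  rw [← ha0] at E0
  rw [← ha1] at E1
  rw [← ha2] at E2
  obtain ⟨x1, x2, hx1s, hx2s, hne, hsm1, hsm2⟩ :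
      ∃ x1 x2, x1 ∈ s ∧ x2 ∈ s ∧ x1 ≠ x2 ∧
        (x1 = a0 ∨ x1 = a1 ∨ x1 = a2 ∨ x1 = b1 ∨ x1 = b2 ∨ x1 = b3) ∧
        (x2 = a0 ∨ x2 = a1 ∨ x2 = a2 ∨ x2 = b1 ∨ x2 = b2 ∨ x2 = b3) := by
    by_cases h1 : b1 ∈ s <;> by_cases h2 : b2 ∈ s <;> by_cases h3 : b3 ∈ s
    · exact ⟨b1, b2, h1, h2, by simp [hb1', hb2'], by tauto, by tauto⟩
    · exact ⟨b1, b2, h1, h2, by simp [hb1', hb2'], by tauto, by tauto⟩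
    · exact ⟨b1, b3, h1, h3, by simp [hb1', hb3'], by tauto, by tauto⟩
    · have ha2s : a2 ∈ s := by
        by_contra k
        rw [if_neg k, if_neg h2, if_neg h3] at E2
        revert E2; decide
      exact ⟨b1, a2, h1, ha2s, by simp [hb1', ha2], by tauto, by tauto⟩
    · exact ⟨b2, b3, h2, h3, by simp [hb2', hb3'], by tauto, by tauto⟩
    · have ha1s : a1 ∈ s := by
        by_contra k
        rw [if_neg k, if_neg h1, if_neg h3] at E1
        revert E1; decide
      exact ⟨b2, a1, h2, ha1s, by simp [hb2', ha1], by tauto, by tauto⟩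
    · have ha0s : a0 ∈ s := by
        by_contra k
        rw [if_neg k, if_neg h1, if_neg h2] at E0
        revert E0; decide
      exact ⟨b3, a0, h3, ha0s, by simp [hb3', ha0], by tauto, by tauto⟩
    · have ha0s : a0 ∈ s := by
        by_contra k
        rw [if_neg k, if_neg h1, if_neg h2] at E0
        revert E0; decide
      have ha1s : a1 ∈ s := by
        by_contra k
        rw [if_neg k, if_neg h1, if_neg h3] at E1
        revert E1; decide
      exact ⟨a0, a1, ha0s, ha1s, by simp [ha0, ha1, Fin.ext_iff], by tauto, by tauto⟩
  have hsmall : ∀ x, (x = a0 ∨ x = a1 ∨ x = a2 ∨ x = b1 ∨ x = b2 ∨ x = b3) →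
      x ≠ Sum.inr 0 ∧ ∀ i : Fin r, 3 ≤ i.val → x ≠ Sum.inl i := by
    intro x hx
    rcases hx with rfl | rfl | rfl | rfl | rfl | rfl <;>
      refine ⟨by simp [ha0, ha1, ha2, hb1', hb2', hb3'], fun i hi h => ?_⟩ <;>
      simp only [ha0, ha1, ha2, hb1', hb2', hb3', Sum.inl.injEq, Fin.ext_iff] at h <;>
      first
        | (simp at h; omega)
        | (simp at h)
        | omega
  obtain ⟨k1z, k1l⟩ := hsmall x1 hsm1
  obtain ⟨k2z, k2l⟩ := hsmall x2 hsm2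
  have hinj : (Finset.univ : Finset (Fin r)).card ≤ s.card := by
    apply Finset.card_le_card_of_injOn
      (fun i : Fin r => if i.val = 0 then Sum.inr 0 else if i.val = 1 then x1
        else if i.val = 2 then x2 else Sum.inl i) ?_ ?_
    · intro i _
      dsimp only
      split_ifs with h1 h2 h3
      · exact hzs
      · exact hx1s
      · exact hx2s
      · exact hbig i (by omega)
    · intro a _ b _ hab
      dsimp only at hab
      split_ifs at hab <;>
        first
          | (exact Fin.ext (by omega))
          | (exact absurd hab.symm k1z)
          | (exact absurd hab.symm k2z)
          | (exact absurd hab k1z)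
          | (exact absurd hab k2z)
          | (exact absurd hab hne)
          | (exact absurd hab.symm hne)
          | (exact absurd hab (k1l _ (by omega)))
          | (exact absurd hab (k2l _ (by omega)))
          | (exact absurd hab.symm (k1l _ (by omega)))
          | (exact absurd hab.symm (k2l _ (by omega)))
          | (exact Sum.inl_injective hab)
          | (exfalso; simpa using hab)
  simpa using hinj

set_option maxHeartbeats 2000000 in
lemma Jcount {r : ℕ} (hr : 4 ≤ r) (s : Finset (Fin r ⊕ Fin 4))
    (hrow : ∀ i : Fin r, ∑ x ∈ s, JrMatrix r x i = 0)
    (hzs : Sum.inr 0 ∈ s) : r ≤ s.card := by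
  classical
  set a0 : Fin r ⊕ Fin 4 := Sum.inl ⟨0, by omega⟩ with ha0
  set a1 : Fin r ⊕ Fin 4 := Sum.inl ⟨1, by omega⟩ with ha1
  set a2 : Fin r ⊕ Fin 4 := Sum.inl ⟨2, by omega⟩ with ha2
  set a3 : Fin r ⊕ Fin 4 := Sum.inl ⟨3, by omega⟩ with ha3
  set b1 : Fin r ⊕ Fin 4 := Sum.inr 1 with hb1'
  set b2 : Fin r ⊕ Fin 4 := Sum.inr 2 with hb2'
  set b3 : Fin r ⊕ Fin 4 := Sum.inr 3 with hb3'
  have hbig : ∀ i : Fin r, 4 ≤ i.val → Sum.inl i ∈ s := by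
    intro i hi
    by_contra hni
    have h0' := hrow i
    rw [sum_support s {Sum.inl i, Sum.inr 0} _ ?_] at h0'
    · rw [Finset.sum_pair (by simp)] at h0'
      rw [if_neg hni, if_pos hzs] at h0'
      simp [JrMatrix, show ¬ i.val = 0 by omega] at h0'
    · intro x hx hxP
      simp only [Finset.mem_insert, Finset.mem_singleton] at hxP
      push_neg at hxP
      rcases x with j | j
      · have hji : j ≠ i := fun h => hxP.1 (by rw [h])
        simp [JrMatrix]
        intro h; exact absurd h.symm hji
      · have hj0 : j ≠ 0 := fun h => hxP.2 (by rw [h])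
        fin_cases j
        · exact absurd rfl hj0
        · simp [JrMatrix]; omega
        · simp [JrMatrix]; omega
        · simp [JrMatrix]; omega
  have mkrow : ∀ (row : Fin r) (y1 y2 : Fin r ⊕ Fin 4), y1 ≠ y2 →
      y1 ≠ Sum.inr 0 → y2 ≠ Sum.inr 0 → Sum.inl row ≠ y1 → Sum.inl row ≠ y2 →
      JrMatrix r y1 row = 1 → JrMatrix r y2 row = 1 →
      JrMatrix r (Sum.inr 0) row = 1 →
      (∀ x, x ∉ ({Sum.inl row, y1, y2, Sum.inr 0} : Finset (Fin r ⊕ Fin 4)) →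
        JrMatrix r x row = 0) →
      (if Sum.inl row ∈ s then (1 : ZMod 2) else 0) + ((if y1 ∈ s then (1:ZMod 2) else 0)
        + ((if y2 ∈ s then (1:ZMod 2) else 0) + 1)) = 0 := by
    intro row y1 y2 h12 h10 h20 hr1 hr2 v1 v2 v0 hsupp
    have h0' := hrow row
    rw [sum_support s {Sum.inl row, y1, y2, Sum.inr 0} _
      (fun x hx hxP => hsupp x hxP)] at h0'
    rw [Finset.sum_insert (by simp [hr1, hr2]),
        Finset.sum_insert (by simp [h12, h10]),
        Finset.sum_pair h20] at h0'
    rw [if_pos hzs, v1, v2, v0] at h0'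
    rw [show JrMatrix r (Sum.inl row) row = 1 by simp [JrMatrix]] at h0'
    exact h0'
  have E0 : (if a0 ∈ s then (1 : ZMod 2) else 0) + ((if b1 ∈ s then (1:ZMod 2) else 0)
      + ((if b2 ∈ s then (1:ZMod 2) else 0) + (if b3 ∈ s then (1:ZMod 2) else 0))) = 0 := by
    have h0' := hrow ⟨0, by omega⟩
    rw [sum_support s {a0, b1, b2, b3} _ ?_] at h0'
    · rw [Finset.sum_insert (by simp [ha0, hb1', hb2', hb3']),
          Finset.sum_insert (by simp [hb1', hb2', hb3']),
          Finset.sum_pair (by simp [hb2', hb3'])] at h0'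
      rw [show JrMatrix r a0 ⟨0, by omega⟩ = 1 by simp [JrMatrix, ha0],
          show JrMatrix r b1 ⟨0, by omega⟩ = 1 by simp [JrMatrix, hb1'],
          show JrMatrix r b2 ⟨0, by omega⟩ = 1 by simp [JrMatrix, hb2'],
          show JrMatrix r b3 ⟨0, by omega⟩ = 1 by simp [JrMatrix, hb3']] at h0'
      exact h0'
    · intro x hx hxP
      simp only [Finset.mem_insert, Finset.mem_singleton] at hxP
      push_neg at hxP
      rcases x with j | j
      · have : (⟨0, by omega⟩ : Fin r) ≠ j := fun h => hxP.1 (by rw [ha0, h])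
        simp [JrMatrix, this]
      · fin_cases j
        · simp [JrMatrix]
        · exact absurd rfl hxP.2.1
        · exact absurd rfl hxP.2.2.1
        · exact absurd rfl hxP.2.2.2
  have supp1 : ∀ x, x ∉ ({a1, b1, b2, Sum.inr 0} : Finset (Fin r ⊕ Fin 4)) →
      JrMatrix r x (⟨1, by omega⟩ : Fin r) = 0 := by
    intro x hxP
    simp only [Finset.mem_insert, Finset.mem_singleton] at hxP
    push_neg at hxP
    rcases x with j | j
    · have : (⟨1, by omega⟩ : Fin r) ≠ j := fun h => hxP.1 (by rw [ha1, h])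
      simp [JrMatrix, this]
    · fin_cases j
      · exact absurd rfl hxP.2.2.2
      · exact absurd rfl hxP.2.1
      · exact absurd rfl hxP.2.2.1
      · simp [JrMatrix]
  have supp2 : ∀ x, x ∉ ({a2, b1, b3, Sum.inr 0} : Finset (Fin r ⊕ Fin 4)) →
      JrMatrix r x (⟨2, by omega⟩ : Fin r) = 0 := by
    intro x hxP
    simp only [Finset.mem_insert, Finset.mem_singleton] at hxP
    push_neg at hxP
    rcases x with j | j
    · have : (⟨2, by omega⟩ : Fin r) ≠ j := fun h => hxP.1 (by rw [ha2, h])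
      simp [JrMatrix, this]
    · fin_cases j
      · exact absurd rfl hxP.2.2.2
      · exact absurd rfl hxP.2.1
      · simp [JrMatrix]
      · exact absurd rfl hxP.2.2.1
  have supp3 : ∀ x, x ∉ ({a3, b2, b3, Sum.inr 0} : Finset (Fin r ⊕ Fin 4)) →
      JrMatrix r x (⟨3, by omega⟩ : Fin r) = 0 := by
    intro x hxP
    simp only [Finset.mem_insert, Finset.mem_singleton] at hxP
    push_neg at hxP
    rcases x with j | j
    · have : (⟨3, by omega⟩ : Fin r) ≠ j := fun h => hxP.1 (by rw [ha3, h])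
      simp [JrMatrix, this]
    · fin_cases j
      · exact absurd rfl hxP.2.2.2
      · simp [JrMatrix]
      · exact absurd rfl hxP.2.1
      · exact absurd rfl hxP.2.2.1
  have E1 := mkrow ⟨1, by omega⟩ b1 b2 (by simp [hb1', hb2']) (by simp [hb1'])
    (by simp [hb2']) (by simp [ha1, hb1']) (by simp [ha1, hb2'])
    (by simp [JrMatrix, hb1']) (by simp [JrMatrix, hb2']) (by simp [JrMatrix])
    (by rw [← ha1]; exact supp1)
  have E2 := mkrow ⟨2, by omega⟩ b1 b3 (by simp [hb1', hb3']) (by simp [hb1'])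
    (by simp [hb3']) (by simp [ha2, hb1']) (by simp [ha2, hb3'])
    (by simp [JrMatrix, hb1']) (by simp [JrMatrix, hb3']) (by simp [JrMatrix])
    (by rw [← ha2]; exact supp2)
  have E3 := mkrow ⟨3, by omega⟩ b2 b3 (by simp [hb2', hb3']) (by simp [hb2'])
    (by simp [hb3']) (by simp [ha3, hb2']) (by simp [ha3, hb3'])
    (by simp [JrMatrix, hb2']) (by simp [JrMatrix, hb3']) (by simp [JrMatrix])
    (by rw [← ha3]; exact supp3)
  rw [← ha1] at E1
  rw [← ha2] at E2
  rw [← ha3] at E3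
  obtain ⟨x1, x2, x3, hx1s, hx2s, hx3s, h12, h13, h23, hsm1, hsm2, hsm3⟩ :
      ∃ x1 x2 x3, x1 ∈ s ∧ x2 ∈ s ∧ x3 ∈ s ∧ x1 ≠ x2 ∧ x1 ≠ x3 ∧ x2 ≠ x3 ∧
        (x1 = a0 ∨ x1 = a1 ∨ x1 = a2 ∨ x1 = a3 ∨ x1 = b1 ∨ x1 = b2 ∨ x1 = b3) ∧
        (x2 = a0 ∨ x2 = a1 ∨ x2 = a2 ∨ x2 = a3 ∨ x2 = b1 ∨ x2 = b2 ∨ x2 = b3) ∧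
        (x3 = a0 ∨ x3 = a1 ∨ x3 = a2 ∨ x3 = a3 ∨ x3 = b1 ∨ x3 = b2 ∨ x3 = b3) := by
    by_cases h1 : b1 ∈ s <;> by_cases h2 : b2 ∈ s <;> by_cases h3 : b3 ∈ s
    · exact ⟨b1, b2, b3, h1, h2, h3, by simp [hb1', hb2'], by simp [hb1', hb3'],
        by simp [hb2', hb3'], by tauto, by tauto, by tauto⟩
    · have k1 : a1 ∈ s := by
        by_contra k; rw [if_neg k, if_pos h1, if_pos h2] at E1; revert E1; decide
      exact ⟨b1, b2, a1, h1, h2, k1, by simp [hb1', hb2'], by simp [hb1', ha1],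
        by simp [hb2', ha1], by tauto, by tauto, by tauto⟩
    · have k2 : a2 ∈ s := by
        by_contra k; rw [if_neg k, if_pos h1, if_pos h3] at E2; revert E2; decide
      exact ⟨b1, b3, a2, h1, h3, k2, by simp [hb1', hb3'], by simp [hb1', ha2],
        by simp [hb3', ha2], by tauto, by tauto, by tauto⟩
    · have k0 : a0 ∈ s := by
        by_contra k; rw [if_neg k, if_pos h1, if_neg h2, if_neg h3] at E0; revert E0; decide
      have k3 : a3 ∈ s := by
        by_contra k; rw [if_neg k, if_neg h2, if_neg h3] at E3; revert E3; decide
      exact ⟨b1, a0, a3, h1, k0, k3, by simp [hb1', ha0], by simp [hb1', ha3],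
        by simp [ha0, ha3, Fin.ext_iff], by tauto, by tauto, by tauto⟩
    · have k3 : a3 ∈ s := by
        by_contra k; rw [if_neg k, if_pos h2, if_pos h3] at E3; revert E3; decide
      exact ⟨b2, b3, a3, h2, h3, k3, by simp [hb2', hb3'], by simp [hb2', ha3],
        by simp [hb3', ha3], by tauto, by tauto, by tauto⟩
    · have k0 : a0 ∈ s := by
        by_contra k; rw [if_neg k, if_neg h1, if_pos h2, if_neg h3] at E0; revert E0; decide
      have k2 : a2 ∈ s := by
        by_contra k; rw [if_neg k, if_neg h1, if_neg h3] at E2; revert E2; decide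
      exact ⟨b2, a0, a2, h2, k0, k2, by simp [hb2', ha0], by simp [hb2', ha2],
        by simp [ha0, ha2, Fin.ext_iff], by tauto, by tauto, by tauto⟩
    · have k0 : a0 ∈ s := by
        by_contra k; rw [if_neg k, if_neg h1, if_neg h2, if_pos h3] at E0; revert E0; decide
      have k1 : a1 ∈ s := by
        by_contra k; rw [if_neg k, if_neg h1, if_neg h2] at E1; revert E1; decide
      exact ⟨b3, a0, a1, h3, k0, k1, by simp [hb3', ha0], by simp [hb3', ha1],
        by simp [ha0, ha1, Fin.ext_iff], by tauto, by tauto, by tauto⟩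
    · have k1 : a1 ∈ s := by
        by_contra k; rw [if_neg k, if_neg h1, if_neg h2] at E1; revert E1; decide
      have k2 : a2 ∈ s := by
        by_contra k; rw [if_neg k, if_neg h1, if_neg h3] at E2; revert E2; decide
      have k3 : a3 ∈ s := by
        by_contra k; rw [if_neg k, if_neg h2, if_neg h3] at E3; revert E3; decide
      exact ⟨a1, a2, a3, k1, k2, k3, by simp [ha1, ha2, Fin.ext_iff],
        by simp [ha1, ha3, Fin.ext_iff], by simp [ha2, ha3, Fin.ext_iff],
        by tauto, by tauto, by tauto⟩
  have hsmall : ∀ x, (x = a0 ∨ x = a1 ∨ x = a2 ∨ x = a3 ∨ x = b1 ∨ x = b2 ∨ x = b3) →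
      x ≠ Sum.inr 0 ∧ ∀ i : Fin r, 4 ≤ i.val → x ≠ Sum.inl i := by
    intro x hx
    rcases hx with rfl | rfl | rfl | rfl | rfl | rfl | rfl <;>
      refine ⟨by simp [ha0, ha1, ha2, ha3, hb1', hb2', hb3'], fun i hi h => ?_⟩ <;>
      simp only [ha0, ha1, ha2, ha3, hb1', hb2', hb3', Sum.inl.injEq, Fin.ext_iff] at h <;>
      first
        | (simp at h; omega)
        | (simp at h)
        | omega
  obtain ⟨k1z, k1l⟩ := hsmall x1 hsm1
  obtain ⟨k2z, k2l⟩ := hsmall x2 hsm2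
  obtain ⟨k3z, k3l⟩ := hsmall x3 hsm3
  have hinj : (Finset.univ : Finset (Fin r)).card ≤ s.card := by
    apply Finset.card_le_card_of_injOn
      (fun i : Fin r => if i.val = 0 then Sum.inr 0 else if i.val = 1 then x1
        else if i.val = 2 then x2 else if i.val = 3 then x3 else Sum.inl i) ?_ ?_
    · intro i _
      dsimp only
      split_ifs with g1 g2 g3 g4
      · exact hzs
      · exact hx1s
      · exact hx2s
      · exact hx3s
      · exact hbig i (by omega)
    · intro a _ b _ hab
      dsimp only at hab
      split_ifs at hab <;>
        first
          | (exact Fin.ext (by omega))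
          | (exact absurd hab.symm k1z)
          | (exact absurd hab.symm k2z)
          | (exact absurd hab.symm k3z)
          | (exact absurd hab k1z)
          | (exact absurd hab k2z)
          | (exact absurd hab k3z)
          | (exact absurd hab h12)
          | (exact absurd hab.symm h12)
          | (exact absurd hab h13)
          | (exact absurd hab.symm h13)
          | (exact absurd hab h23)
          | (exact absurd hab.symm h23)
          | (exact absurd hab (k1l _ (by omega)))
          | (exact absurd hab (k2l _ (by omega)))
          | (exact absurd hab (k3l _ (by omega)))
          | (exact absurd hab.symm (k1l _ (by omega)))
          | (exact absurd hab.symm (k2l _ (by omega)))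
          | (exact absurd hab.symm (k3l _ (by omega)))
          | (exact Sum.inl_injective hab)
          | (exfalso; simpa using hab)
  simpa using hinj


/-- easy direction of Theorem 1.1: the distinguished elements of
`L_r` (`r ≥ 3`) and `J_r` (`r ≥ 4`) are loose, and the distinguished element `z` is
loose in every coloop-free restriction of `M_r` (`r ≥ 2`) or `N_r` (`r ≥ 3`) whose
ground set contains `z`. -/
theorem distinguished_elements_loose :
    (∀ r : ℕ, 3 ≤ r → ∀ L : Matroid (Fin r ⊕ Fin 4),
        IsVectorMatroidOn (ZMod 2) (LrMatrix r) L →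
        Loose L (Sum.inr 0)) ∧
    (∀ r : ℕ, 4 ≤ r → ∀ J : Matroid (Fin r ⊕ Fin 4),
        IsVectorMatroidOn (ZMod 2) (JrMatrix r) J →
        Loose J (Sum.inr 0)) ∧
    (∀ r : ℕ, ∀ hr : 2 ≤ r, ∀ MM : Matroid (Fin r ⊕ Fin r),
        IsVectorMatroidOn (ZMod 2) (MrMatrix r) MM →
        ∀ R : Set (Fin r ⊕ Fin r), Sum.inr (⟨0, by omega⟩ : Fin r) ∈ R →
          NoColoops (MM ↾ R) →
          Loose (MM ↾ R) (Sum.inr (⟨0, by omega⟩ : Fin r))) ∧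
    (∀ r : ℕ, ∀ hr : 3 ≤ r, ∀ NN : Matroid (Fin r ⊕ Fin (r - 1)),
        IsVectorMatroidOn (ZMod 2) (NrMatrix r) NN →
        ∀ R : Set (Fin r ⊕ Fin (r - 1)),
          Sum.inr (⟨0, by omega⟩ : Fin (r - 1)) ∈ R →
          NoColoops (NN ↾ R) →
          Loose (NN ↾ R) (Sum.inr (⟨0, by omega⟩ : Fin (r - 1)))) := by
  refine ⟨?_, ?_, ?_, ?_⟩
  · intro r hr L hL
    obtain ⟨hE, hI⟩ := hL
    refine ⟨by rw [hE]; exact mem_univ _, fun C hC hz => ?_⟩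
    have h1 : rank L ≤ r := rank_le_of_rep (A := LrMatrix r) (fun I h => (hI I).1 h)
    have h2 : r ≤ C.ncard := by
      rw [Set.ncard_eq_toFinset_card C]
      exact Lcount hr _ (fun i => circuit_sum hE hI hC i) ((C.toFinite).mem_toFinset.2 hz)
    omega
  · intro r hr J hJ
    obtain ⟨hE, hI⟩ := hJ
    refine ⟨by rw [hE]; exact mem_univ _, fun C hC hz => ?_⟩
    have h1 : rank J ≤ r := rank_le_of_rep (A := JrMatrix r) (fun I h => (hI I).1 h)
    have h2 : r ≤ C.ncard := by
      rw [Set.ncard_eq_toFinset_card C]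
      exact Jcount hr _ (fun i => circuit_sum hE hI hC i) ((C.toFinite).mem_toFinset.2 hz)
    omega
  · intro r hr MM hMM R hzR _hNC
    obtain ⟨hE, hI⟩ := hMM
    refine ⟨by rw [Matroid.restrict_ground_eq]; exact hzR, fun C hC hz => ?_⟩
    have hC' : Circuit MM C := circuit_of_restrict hE hC
    have h1 : rank (MM ↾ R) ≤ r := rank_le_of_rep (A := MrMatrix r)
      (fun I h => (hI I).1 ((Matroid.restrict_indep_iff.1 h).1))
    have h2 : r ≤ C.ncard := by
      rw [Set.ncard_eq_toFinset_card C]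
      exact Mcount hr _ rfl (fun i => circuit_sum hE hI hC' i)
        ((C.toFinite).mem_toFinset.2 hz)
    omega
  · intro r hr NN hNN R hzR _hNC
    obtain ⟨hE, hI⟩ := hNN
    refine ⟨by rw [Matroid.restrict_ground_eq]; exact hzR, fun C hC hz => ?_⟩
    have hC' : Circuit NN C := circuit_of_restrict hE hC
    have h1 : rank (NN ↾ R) ≤ r := rank_le_of_rep (A := NrMatrix r)
      (fun I h => (hI I).1 ((Matroid.restrict_indep_iff.1 h).1))
    have h2 : r ≤ C.ncard := by
      rw [Set.ncard_eq_toFinset_card C]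
      exact Ncount hr _ rfl (fun i => circuit_sum hE hI hC' i)
        ((C.toFinite).mem_toFinset.2 hz)
    omega

end LoosePaper
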